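/- Let G be a connected Hausdorff topological group with trivial center, and let Γ be a dense subgroup of G. Then Γ is an ICC group: every conjugacy class in Γ other than that of the identity is infinite. -/

import Mathlib

/-- A dense subgroup `Γ` of a connected Hausdorff topological group `G` with trivial center
is an ICC group: every `Γ`-conjugacy class other than that of the identity is infinite. -/
theorem dense_subgroup_of_centerfree_connected_is_ICC
    {G : Type*} [Group G] [TopologicalSpace G] [IsTopologicalGroup G] [T2Space G]
    [ConnectedSpace G] (hcenter : Subgroup.center G = ⊥)
    (Γ : Subgroup G) (hdense : Dense (Γ : Set G)) :
    ∀ γ ∈ Γ, γ ≠ 1 → {x : G | ∃ h ∈ Γ, h * γ * h⁻¹ = x}.Infinite := by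
  intro γ hγ hγ1
  by_contra hfin
  rw [Set.not_infinite] at hfin
  set S : Set G := {x : G | ∃ h ∈ Γ, h * γ * h⁻¹ = x} with hS
  set f : G → G := fun g => g * γ * g⁻¹ with hfdef
  have hf : Continuous f := by
    exact (continuous_id.mul continuous_const).mul continuous_inv
  have hmaps : Set.MapsTo f (Γ : Set G) S := fun h hh => ⟨h, hh, rfl⟩
  have hmaps2 : Set.MapsTo f (Set.univ : Set G) S := by
    have := hmaps.closure hf
    rwa [hdense.closure_eq, hfin.isClosed.closure_eq] at this
  have key : ∀ g : G, f g = γ := by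
    set A : Set G := {g : G | f g = γ} with hA
    have hclosed : IsClosed A := isClosed_eq hf continuous_const
    have hopen : IsOpen A := by
      have hcompl : Aᶜ = f ⁻¹' (S \ {γ}) := by
        ext g
        simp only [Set.mem_compl_iff, hA, Set.mem_setOf_eq, Set.mem_preimage,
          Set.mem_diff, Set.mem_singleton_iff]
        constructor
        · intro hne
          exact ⟨hmaps2 (Set.mem_univ g), hne⟩
        · intro ⟨_, hne⟩
          exact hne
      have : IsClosed Aᶜ := by
        rw [hcompl]
        exact ((hfin.diff (t := {γ})).isClosed).preimage hf
      simpa using this.isOpen_compl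
    have hne : A.Nonempty := ⟨1, by simp [hA, hfdef]⟩
    have hcl : IsClopen A := ⟨hclosed, hopen⟩
    have := hcl.eq_univ hne
    intro g
    have : g ∈ A := this ▸ Set.mem_univ g
    exact this
  have hcentral : γ ∈ Subgroup.center G := by
    rw [Subgroup.mem_center_iff]
    intro g
    have := key g
    simp only [hfdef] at this
    calc g * γ = g * γ * g⁻¹ * g := by group
    _ = γ * g := by rw [this]
  rw [hcenter, Subgroup.mem_bot] at hcentral
  exact hγ1 hcentral
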